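/- Let T₀ > 0 and ε ∈ (0,1]. Define x_ε(t) = ( ε sin(t/ε), ε cos(t/ε) − ε, ε(t/2 − ε sin(2t/ε)/4) ) and ξ_ε(t) = ( cos(t/ε)/2, 0, 1/(2ε) ). Then for all t ∈ ℝ the curve (x_ε,ξ_ε) solves Hamilton's equations ẋ = ∇_ξ H(x,ξ), ξ̇ = −∇ₓ H(x,ξ) for the Heisenberg Hamiltonian H; moreover H(x_ε(t),ξ_ε(t)) = 1/4 for all t, and for every t ∈ [0,T₀] each coordinate of x_ε(t) has absolute value at most (2+T₀)ε. -/

import Mathlib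

open Real Set

noncomputable section

/-- `x_ε(t) = (ε sin(t/ε), ε cos(t/ε) - ε, ε(t/2 - ε sin(2t/ε)/4))`. -/
def xe1 (ε t : ℝ) : ℝ := ε * Real.sin (t / ε)
def xe2 (ε t : ℝ) : ℝ := ε * Real.cos (t / ε) - ε
def xe3 (ε t : ℝ) : ℝ := ε * (t / 2 - ε * Real.sin (2 * t / ε) / 4)

/-- `ξ_ε(t) = (cos(t/ε)/2, 0, 1/(2ε))`. -/
def xi1 (ε t : ℝ) : ℝ := Real.cos (t / ε) / 2
def xi2 (ε t : ℝ) : ℝ := 0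
def xi3 (ε t : ℝ) : ℝ := 1 / (2 * ε)

/-- **explicit spiraling geodesics.** For `0 < ε ≤ 1`, the
explicit curves `(x_ε, ξ_ε)` solve Hamilton's equations for the flat 3D
Heisenberg Hamiltonian `H(x,ξ) = ξ₁² + (ξ₂ - x₁ξ₃)²`, satisfy `H ≡ 1/4`, and
each coordinate of `x_ε(t)` is bounded by `(2 + T₀)ε` for `t ∈ [0,T₀]`. -/
theorem statement_12 (T₀ ε : ℝ) (hT₀ : 0 < T₀) (hε : ε ∈ Ioc (0 : ℝ) 1) :
    (∀ t : ℝ,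
      HasDerivAt (xe1 ε) (2 * xi1 ε t) t ∧
      HasDerivAt (xe2 ε) (2 * (xi2 ε t - xe1 ε t * xi3 ε t)) t ∧
      HasDerivAt (xe3 ε) (-2 * xe1 ε t * (xi2 ε t - xe1 ε t * xi3 ε t)) t ∧
      HasDerivAt (xi1 ε) (2 * xi3 ε t * (xi2 ε t - xe1 ε t * xi3 ε t)) t ∧
      HasDerivAt (xi2 ε) 0 t ∧ HasDerivAt (xi3 ε) 0 t) ∧
    (∀ t : ℝ, xi1 ε t ^ 2 + (xi2 ε t - xe1 ε t * xi3 ε t) ^ 2 = 1 / 4) ∧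
    (∀ t ∈ Icc (0 : ℝ) T₀,
      |xe1 ε t| ≤ (2 + T₀) * ε ∧ |xe2 ε t| ≤ (2 + T₀) * ε ∧
        |xe3 ε t| ≤ (2 + T₀) * ε) := by
  obtain ⟨hε0, hε1⟩ := hε
  have hεne : ε ≠ 0 := ne_of_gt hε0
  refine ⟨fun t => ?_, fun t => ?_, fun t ht => ?_⟩
  · have hd : HasDerivAt (fun t : ℝ => t / ε) (1 / ε) t := by
      simpa using (hasDerivAt_id t).div_const ε
    have hd2 : HasDerivAt (fun t : ℝ => 2 * t / ε) (2 / ε) t := by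
      simpa [mul_comm, mul_div_assoc] using ((hasDerivAt_id t).const_mul 2).div_const ε
    have hsin : HasDerivAt (fun t : ℝ => Real.sin (t / ε)) (Real.cos (t / ε) * (1 / ε)) t :=
      hd.sin
    have hcos : HasDerivAt (fun t : ℝ => Real.cos (t / ε)) (-Real.sin (t / ε) * (1 / ε)) t :=
      hd.cos
    have hsin2 : HasDerivAt (fun t : ℝ => Real.sin (2 * t / ε)) (Real.cos (2 * t / ε) * (2 / ε)) t :=
      hd2.sin
    refine ⟨?_, ?_, ?_, ?_,
      (by unfold xi2; exact hasDerivAt_const t 0),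
      (by unfold xi3; exact hasDerivAt_const t (1 / (2 * ε)))⟩
    · have := hsin.const_mul ε
      unfold xe1 xi1
      refine this.congr_deriv (Eq.symm ?_)
      field_simp
    · have := (hcos.const_mul ε).sub_const ε
      unfold xe2 xi2 xe1 xi3
      refine this.congr_deriv (Eq.symm ?_)
      field_simp
      ring
    · have h1 : HasDerivAt (fun t : ℝ => t / 2 - ε * Real.sin (2 * t / ε) / 4)
          (1 / 2 - ε * (Real.cos (2 * t / ε) * (2 / ε)) / 4) t :=
        ((hasDerivAt_id t).div_const 2).sub ((hsin2.const_mul ε).div_const 4)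
      have := h1.const_mul ε
      unfold xe3 xe1 xi2 xi3
      refine this.congr_deriv (Eq.symm ?_)
      have hcos2 : Real.cos (2 * t / ε) = 1 - 2 * Real.sin (t / ε) ^ 2 := by
        rw [show 2 * t / ε = 2 * (t / ε) by ring, Real.cos_two_mul']
        linarith [Real.sin_sq_add_cos_sq (t / ε)]
      rw [hcos2]
      field_simp
      ring
    · have := hcos.div_const 2
      unfold xi1 xi2 xe1 xi3
      refine this.congr_deriv (Eq.symm ?_)
      field_simp
      ring
  · unfold xi1 xi2 xe1 xi3
    have h : ε * Real.sin (t / ε) * (1 / (2 * ε)) = Real.sin (t / ε) / 2 := by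
      field_simp
    rw [h]
    have h2 := Real.sin_sq_add_cos_sq (t / ε)
    ring_nf at h2 ⊢
    linarith
  · obtain ⟨ht0, htT⟩ := ht
    have hT1 : (1 : ℝ) ≤ 2 + T₀ := by linarith
    have hεle : ε ≤ (2 + T₀) * ε := by nlinarith
    refine ⟨?_, ?_, ?_⟩
    · unfold xe1
      rw [abs_mul, abs_of_pos hε0]
      calc ε * |Real.sin (t / ε)| ≤ ε * 1 := by
            exact mul_le_mul_of_nonneg_left (Real.abs_sin_le_one _) hε0.le
        _ = ε := mul_one ε
        _ ≤ (2 + T₀) * ε := hεle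
    · unfold xe2
      have : ε * Real.cos (t / ε) - ε = ε * (Real.cos (t / ε) - 1) := by ring
      rw [this, abs_mul, abs_of_pos hε0]
      have h1 : |Real.cos (t / ε) - 1| ≤ 2 := by
        have := Real.neg_one_le_cos (t / ε)
        have := Real.cos_le_one (t / ε)
        rw [abs_le]; constructor <;> linarith
      nlinarith [abs_nonneg (Real.cos (t / ε) - 1)]
    · unfold xe3
      rw [abs_mul, abs_of_pos hε0]
      have h1 : |t / 2 - ε * Real.sin (2 * t / ε) / 4| ≤ T₀ / 2 + 1 / 4 := by
        have hs := Real.abs_sin_le_one (2 * t / ε)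
        have h2 : |ε * Real.sin (2 * t / ε) / 4| ≤ 1 / 4 := by
          rw [abs_div, abs_mul, abs_of_pos hε0]
          have : ε * |Real.sin (2 * t / ε)| ≤ 1 := by nlinarith
          simpa [abs_of_nonneg (by norm_num : (0:ℝ) ≤ 4)] using
            div_le_div_of_nonneg_right (c := 4) this (by norm_num) |>.trans (by norm_num)
        have h3 : |t / 2| ≤ T₀ / 2 := by
          rw [abs_div, abs_of_nonneg ht0]
          simp [abs_of_nonneg (by norm_num : (0:ℝ) ≤ 2)]
          linarith
        calc |t / 2 - ε * Real.sin (2 * t / ε) / 4|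
            ≤ |t / 2| + |ε * Real.sin (2 * t / ε) / 4| := abs_sub _ _
          _ ≤ T₀ / 2 + 1 / 4 := add_le_add h3 h2
      have : ε * |t / 2 - ε * Real.sin (2 * t / ε) / 4| ≤ ε * (T₀ / 2 + 1 / 4) :=
        mul_le_mul_of_nonneg_left h1 hε0.le
      nlinarith
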